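/- Let V be a finite-dimensional real normed vector space and I a finite set with |I| ≥ 2. Define r(x,t) = max_{i∈I}(|x_i| + t_i) on R_V(I) = {(x,t) : ∑ t_i = 1, ∑ t_i x_i = 0, t_i > 0}. Fix (x,t) with r(x,t) > 1, let π be the partition generated by i ~ j iff |x_i − x_j| ≤ t_i + t_j, and define the vector X_i = −x_{[i]} (the negative of the weighted barycentre of the block containing i). Then for 0 < s < 1 and every i ∈ I achieving |x_i| + t_i = r(x,t), one has |x_i + sX_i| + t_i ≤ r(x,t) − s(r(x,t) − t_{[i]}), and moreover r(x,t) − t_{[i]} > min_{k∈I} t_k. -/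

import Mathlib

section Aux

variable {I : Type*} [DecidableEq I]

/-- `Grow r i S`: `S` can be built from `{i}` by repeatedly adding a vertex
adjacent to an already present vertex. -/
inductive Grow (r : I → I → Prop) (i : I) : Finset I → Prop
  | base : Grow r i {i}
  | step {S : Finset I} {j k : I} (hS : Grow r i S) (hj : j ∉ S) (hk : k ∈ S)
      (h : r k j) : Grow r i (insert j S)

lemma Grow.mem {r : I → I → Prop} {i : I} {S : Finset I} (h : Grow r i S) : i ∈ S := by
  induction h with
  | base => simp
  | step hS hj hk h ih => exact Finset.mem_insert_of_mem ih

lemma eqvGen_to_rtg {r : I → I → Prop} (hsymm : ∀ a b, r a b → r b a) {a b : I}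
    (h : Relation.EqvGen r a b) : Relation.ReflTransGen r a b := by
  induction h with
  | rel a b h => exact Relation.ReflTransGen.single h
  | refl a => exact Relation.ReflTransGen.refl
  | symm a b h ih => exact (@Relation.ReflTransGen.symmetric _ r ⟨fun a b => hsymm a b⟩).symm _ _ ih
  | trans a b c h1 h2 ih1 ih2 => exact ih1.trans ih2

lemma grow_extend {r : I → I → Prop} (hsymm : ∀ a b, r a b → r b a) (i : I) (C : Finset I)
    (hC : ∀ j, j ∈ C ↔ Relation.EqvGen r i j) :
    ∀ n (A : Finset I), Grow r i A → A ⊆ C → C.card - A.card ≤ n → Grow r i C := by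
  intro n
  induction n with
  | zero =>
    intro A hA hAC hcard
    have : A = C := Finset.eq_of_subset_of_card_le hAC (by omega)
    exact this ▸ hA
  | succ n ih =>
    intro A hA hAC hcard
    by_cases hAC' : A = C
    · exact hAC' ▸ hA
    · -- find a crossing edge
      obtain ⟨b, hbC, hbA⟩ : ∃ b, b ∈ C ∧ b ∉ A := by
        by_contra hcon
        push_neg at hcon
        exact hAC' (Finset.Subset.antisymm hAC (fun b hb => hcon b hb))
      have hrtg : Relation.ReflTransGen r i b := eqvGen_to_rtg hsymm ((hC b).mp hbC)
      have cross : ∀ c, Relation.ReflTransGen r i c →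
          c ∈ A ∨ ∃ k ∈ A, ∃ j, j ∉ A ∧ r k j := by
        intro c hc
        induction hc with
        | refl => exact Or.inl hA.mem
        | @tail p q h1 h2 ih' =>
          rcases ih' with hmem | hcr
          · by_cases hq : q ∈ A
            · exact Or.inl hq
            · exact Or.inr ⟨p, hmem, q, hq, h2⟩
          · exact Or.inr hcr
      rcases cross b hrtg with hbA' | ⟨k, hkA, j, hjA, hkj⟩
      · exact absurd hbA' hbA
      · have hjC : j ∈ C := by
          rw [hC]
          exact Relation.EqvGen.trans _ _ _ ((hC k).mp (hAC hkA)) (Relation.EqvGen.rel _ _ hkj)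
        have hgrow : Grow r i (insert j A) := Grow.step hA hjA hkA hkj
        have hsub : insert j A ⊆ C := Finset.insert_subset hjC hAC
        have hcard' : C.card - (insert j A).card ≤ n := by
          rw [Finset.card_insert_of_notMem hjA]
          have := Finset.card_lt_card (Finset.ssubset_iff_subset_ne.mpr ⟨hAC, hAC'⟩)
          omega
        exact ih _ hgrow hsub hcard'

lemma grow_class {r : I → I → Prop} (hsymm : ∀ a b, r a b → r b a) (i : I) (C : Finset I)
    (hC : ∀ j, j ∈ C ↔ Relation.EqvGen r i j) : Grow r i C := by
  have hiC : i ∈ C := (hC i).mpr (Relation.EqvGen.refl i)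
  have hsub : ({i} : Finset I) ⊆ C := Finset.singleton_subset_iff.mpr hiC
  exact grow_extend hsymm i C hC C.card {i} Grow.base hsub (by omega)

variable {V : Type*} [NormedAddCommGroup V] [NormedSpace ℝ V]

/-- The key barycentre estimate by induction on growing the block. -/
lemma grow_norm (x : I → V) (t : I → ℝ) (ht : ∀ k, 0 < t k) {i : I} {S : Finset I}
    (hG : Grow (fun a b => ‖x a - x b‖ ≤ t a + t b) i S) :
    ∀ m ∈ S, ‖(∑ l ∈ S, t l) • x m - ∑ l ∈ S, t l • x l‖
      ≤ (∑ l ∈ S, t l) * ((∑ l ∈ S, t l) - t m) := by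
  induction hG with
  | base =>
    intro m hm
    rw [Finset.mem_singleton] at hm
    subst hm
    simp
  | @step S j k hS hj hk hkj ih =>
    have hS' : i ∈ S := hS.mem
    have hT' : 0 < ∑ l ∈ S, t l := Finset.sum_pos (fun l _ => ht l) ⟨i, hS'⟩
    set T' : ℝ := ∑ l ∈ S, t l with hT'def
    set y' : V := ∑ l ∈ S, t l • x l with hy'def
    have hsum : ∑ l ∈ insert j S, t l = t j + T' := Finset.sum_insert hj
    have hsumv : ∑ l ∈ insert j S, t l • x l = t j • x j + y' := Finset.sum_insert hj
    intro m hm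
    rw [hsum, hsumv]
    have ihk : ‖T' • x k - y'‖ ≤ T' * (T' - t k) := ih k hk
    rcases Finset.mem_insert.mp hm with hmj | hmS
    · -- m = j
      subst hmj
      have heq : (t m + T') • x m - (t m • x m + y') = T' • x m - y' := by module
      rw [heq]
      have h1 : ‖T' • x m - y'‖ ≤ ‖T' • x m - T' • x k‖ + ‖T' • x k - y'‖ := by
        have : T' • x m - y' = (T' • x m - T' • x k) + (T' • x k - y') := by module
        rw [this]; exact norm_add_le _ _
      have h2 : ‖T' • x m - T' • x k‖ ≤ T' * (t k + t m) := by
        rw [← smul_sub, norm_smul, Real.norm_of_nonneg hT'.le]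
        have : ‖x m - x k‖ ≤ t k + t m := by
          rw [norm_sub_rev]
          exact hkj
        nlinarith
      nlinarith
    · -- m ∈ S
      have ihm : ‖T' • x m - y'‖ ≤ T' * (T' - t m) := ih m hmS
      have hmk : ‖x m - x k‖ ≤ 2 * T' - t m - t k := by
        have h1 : T' • (x m - x k) = (T' • x m - y') - (T' • x k - y') := by module
        have h2 : T' * ‖x m - x k‖ ≤ T' * (T' - t m) + T' * (T' - t k) := by
          calc T' * ‖x m - x k‖ = ‖T' • (x m - x k)‖ := by
                rw [norm_smul, Real.norm_of_nonneg hT'.le]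
            _ ≤ ‖T' • x m - y'‖ + ‖T' • x k - y'‖ := by rw [h1]; exact norm_sub_le _ _
            _ ≤ T' * (T' - t m) + T' * (T' - t k) := add_le_add ihm ihk
        nlinarith
      have hmj' : ‖x m - x j‖ ≤ 2 * T' - t m + t j := by
        calc ‖x m - x j‖ ≤ ‖x m - x k‖ + ‖x k - x j‖ := by
              have : x m - x j = (x m - x k) + (x k - x j) := by module
              rw [this]; exact norm_add_le _ _
          _ ≤ (2 * T' - t m - t k) + (t k + t j) := add_le_add hmk hkj
          _ = 2 * T' - t m + t j := by ring
      have hsplit : (t j + T') • x m - (t j • x j + y')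
          = t j • (x m - x j) + (T' • x m - y') := by module
      calc ‖(t j + T') • x m - (t j • x j + y')‖
          ≤ ‖t j • (x m - x j)‖ + ‖T' • x m - y'‖ := by rw [hsplit]; exact norm_add_le _ _
        _ ≤ t j * (2 * T' - t m + t j) + T' * (T' - t m) := by
            refine add_le_add ?_ ihm
            rw [norm_smul, Real.norm_of_nonneg (ht j).le]
            exact mul_le_mul_of_nonneg_left hmj' (ht j).le
        _ = (t j + T') * ((t j + T') - t m) := by ring

end Aux

/-- The key estimate for the flow in Section 3: let `r = max_k (‖x k‖ + t k) > 1` on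
`R_V(I)`, let `B i` be the block containing `i` of the partition generated by
`a ~ b ↔ ‖x a - x b‖ ≤ t a + t b`, and let `X i = -x_{B i}` be the negative of the
weighted barycentre of the block.  Then for `0 < s < 1` and every `i` achieving the
maximum, `‖x i + s • X i‖ + t i ≤ r - s * (r - t_{B i})`, and moreover
`r - t_{B i} > min_k t k`. -/
theorem stmt_17 {V : Type*} [NormedAddCommGroup V] [NormedSpace ℝ V]
    {I : Type*} [Fintype I] [Nonempty I] (hcard : 2 ≤ Fintype.card I)
    (x : I → V) (t : I → ℝ) (ht : ∀ k, 0 < t k)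
    (htsum : ∑ k, t k = 1) (hbar : ∑ k, t k • x k = 0)
    (hr : 1 < Finset.univ.sup' Finset.univ_nonempty (fun k => ‖x k‖ + t k))
    (B : I → Finset I)
    (hB : ∀ a b, b ∈ B a ↔ Relation.EqvGen (fun a b => ‖x a - x b‖ ≤ t a + t b) a b) :
    ∀ s : ℝ, 0 < s → s < 1 → ∀ i : I,
      ‖x i‖ + t i = Finset.univ.sup' Finset.univ_nonempty (fun k => ‖x k‖ + t k) →
      ‖x i + s • (-((∑ l ∈ B i, t l)⁻¹ • ∑ l ∈ B i, t l • x l))‖ + t i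
          ≤ Finset.univ.sup' Finset.univ_nonempty (fun k => ‖x k‖ + t k)
            - s * (Finset.univ.sup' Finset.univ_nonempty (fun k => ‖x k‖ + t k)
                - ∑ l ∈ B i, t l) ∧
      Finset.univ.inf' Finset.univ_nonempty t
        < Finset.univ.sup' Finset.univ_nonempty (fun k => ‖x k‖ + t k)
            - ∑ l ∈ B i, t l := by
  classical
  intro s hs0 hs1 i hi
  set r : ℝ := Finset.univ.sup' Finset.univ_nonempty (fun k => ‖x k‖ + t k) with hrdef
  set rel : I → I → Prop := fun a b => ‖x a - x b‖ ≤ t a + t b with hreldef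
  have hsymm : ∀ a b, rel a b → rel b a := by
    intro a b h
    simpa only [hreldef, norm_sub_rev, add_comm] using h
  have hGrow : Grow rel i (B i) := grow_class hsymm i (B i) (fun j => hB i j)
  have hiS : i ∈ B i := hGrow.mem
  have key := grow_norm x t ht hGrow
  set T : ℝ := ∑ l ∈ B i, t l with hTdef
  set y : V := ∑ l ∈ B i, t l • x l with hydef
  have hT : 0 < T := Finset.sum_pos (fun l _ => ht l) ⟨i, hiS⟩
  -- the block is not everything
  have hne : B i ≠ Finset.univ := by
    intro hu
    have hT1 : T = 1 := by rw [hTdef, hu]; exact htsum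
    have hy0 : y = 0 := by rw [hydef, hu]; exact hbar
    have hle : ∀ k : I, ‖x k‖ + t k ≤ 1 := by
      intro k
      have := key k (hu ▸ Finset.mem_univ k)
      rw [hT1, hy0] at this
      simp only [one_smul, sub_zero, one_mul] at this
      linarith
    have : r ≤ 1 := Finset.sup'_le _ _ (fun k _ => hle k)
    linarith
  obtain ⟨k, hkB⟩ : ∃ k, k ∉ B i := by
    by_contra hcon
    push_neg at hcon
    exact hne (Finset.eq_univ_iff_forall.mpr hcon)
  have hTk : T + t k ≤ 1 := by
    have hsub : B i ⊆ Finset.univ.erase k :=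
      fun l hl => Finset.mem_erase.mpr ⟨fun h => hkB (h ▸ hl), Finset.mem_univ l⟩
    have h1 : T ≤ ∑ l ∈ Finset.univ.erase k, t l :=
      Finset.sum_le_sum_of_subset_of_nonneg hsub (fun l _ _ => (ht l).le)
    have h2 : ∑ l ∈ Finset.univ.erase k, t l + t k = 1 := by
      rw [Finset.sum_erase_add _ _ (Finset.mem_univ k)]; exact htsum
    linarith
  have hmin : Finset.univ.inf' Finset.univ_nonempty t ≤ t k :=
    Finset.inf'_le _ (Finset.mem_univ k)
  constructor
  · -- main estimate
    have hkey : ‖T • x i - y‖ ≤ T * (T - t i) := key i hiS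
    have hbary : ‖x i - T⁻¹ • y‖ ≤ T - t i := by
      have heq : x i - T⁻¹ • y = T⁻¹ • (T • x i - y) := by
        rw [smul_sub, smul_smul, inv_mul_cancel₀ hT.ne', one_smul]
      rw [heq, norm_smul, Real.norm_of_nonneg (inv_nonneg.mpr hT.le)]
      calc T⁻¹ * ‖T • x i - y‖ ≤ T⁻¹ * (T * (T - t i)) := by
            exact mul_le_mul_of_nonneg_left hkey (inv_nonneg.mpr hT.le)
        _ = T - t i := by field_simp
    have hcombo : x i + s • (-(T⁻¹ • y)) = s • (x i - T⁻¹ • y) + (1 - s) • x i := by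
      module
    have hnv : ‖x i + s • (-(T⁻¹ • y))‖ ≤ s * (T - t i) + (1 - s) * ‖x i‖ := by
      rw [hcombo]
      calc ‖s • (x i - T⁻¹ • y) + (1 - s) • x i‖
          ≤ ‖s • (x i - T⁻¹ • y)‖ + ‖(1 - s) • x i‖ := norm_add_le _ _
        _ ≤ s * (T - t i) + (1 - s) * ‖x i‖ := by
            rw [norm_smul, norm_smul, Real.norm_of_nonneg hs0.le,
              Real.norm_of_nonneg (by linarith : (0:ℝ) ≤ 1 - s)]
            exact add_le_add (mul_le_mul_of_nonneg_left hbary hs0.le) le_rfl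
    have hxi : ‖x i‖ = r - t i := by linarith [hi]
    rw [hxi] at hnv
    linarith
  · linarith
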